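/- arXiv:1311.7168 — 2 statements merged into one kernel-verified Lean document; each statement's English description precedes it below -/
import Mathlib

section
/- The function D is continuous on [0,∞) × ℝ^m. -/
open MeasureTheory Real Filter Set
open scoped Topology Pointwise

noncomputable section

/-- The unit simplex Δ in ℝ^m. -/
def simplex (m : ℕ) : Set (Fin m → ℝ) :=
  {l | (∀ i, 0 ≤ l i) ∧ ∑ i, l i ≤ 1}

/-- ⟨λ̂, log λ̂⟩ = Σ_{i=0}^m λ_i log λ_i, with λ_0 = 1 - Σ λ_i.
Note `Real.log 0 = 0`, so the convention 0·log 0 = 0 holds. -/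
def ent (m : ℕ) (l : Fin m → ℝ) : ℝ :=
  (1 - ∑ i, l i) * Real.log (1 - ∑ i, l i) + ∑ i, l i * Real.log (l i)

/-- b(λ,ρ) = log(1+|e^ρ|) + Σ_{i=0}^m (λ_i log λ_i − ρ_i λ_i), where ρ_0 = 0. -/
def bfun (m : ℕ) (l ρ : Fin m → ℝ) : ℝ :=
  Real.log (1 + ∑ i, Real.exp (ρ i)) + ent m l - ∑ i, ρ i * l i

/-- μ(ρ) : μ_i(ρ) = e^{ρ_i}/(1+|e^ρ|) for i = 1,…,m. -/
def mu (m : ℕ) (ρ : Fin m → ℝ) : Fin m → ℝ :=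
  fun i => Real.exp (ρ i) / (1 + ∑ j, Real.exp (ρ j))

/-- B(s,ρ,x) = b((1−s)μ(ρ) + s x, ρ). -/
def Bfun (m : ℕ) (s : ℝ) (ρ x : Fin m → ℝ) : ℝ :=
  bfun m (fun i => (1 - s) * mu m ρ i + s * x i) ρ

/-- D(t,ρ) = m!·vol({λ ∈ Δ : b(λ,ρ) ≤ t}). -/
def Dfun (m : ℕ) (t : ℝ) (ρ : Fin m → ℝ) : ℝ :=
  (m.factorial : ℝ) * (volume {l ∈ simplex m | bfun m l ρ ≤ t}).toReal

/-- F_n(ρ) = ∫_{Δ^n} max_j [⟨ρ,λ^j⟩ − ⟨λ̂^j, log λ̂^j⟩] dλ^1⋯dλ^n, each dλ^j = m!·Lebesgue. -/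
def Fn (m n : ℕ) (ρ : Fin m → ℝ) : ℝ :=
  ((m.factorial : ℝ)) ^ n *
    ∫ L in {L : Fin n → Fin m → ℝ | ∀ j, L j ∈ simplex m},
      ⨆ j, (∑ i, ρ i * L j i - ent m (L j))

/-- Partial derivative in the variable ρ_p. -/
def pderivR (m : ℕ) (p : Fin m) (f : (Fin m → ℝ) → ℝ) (ρ : Fin m → ℝ) : ℝ :=
  deriv (fun r => f (Function.update ρ p r)) (ρ p)

/-- H = {(t,ρ,x) ∈ (0,∞) × ℝ^m × ∂Δ : t < b(x,ρ)}. -/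
def Hset (m : ℕ) : Set (ℝ × (Fin m → ℝ) × (Fin m → ℝ)) :=
  {q | q.2.2 ∈ frontier (simplex m) ∧ 0 < q.1 ∧ q.1 < bfun m q.2.2 q.2.1}


namespace DAux

variable {m : ℕ}

lemma Tpos (ρ : Fin m → ℝ) : (0:ℝ) < 1 + ∑ i, Real.exp (ρ i) := by positivity

lemma mu_pos (ρ : Fin m → ℝ) (i : Fin m) : 0 < mu m ρ i :=
  div_pos (Real.exp_pos _) (Tpos ρ)

lemma sum_mu (ρ : Fin m → ℝ) :
    ∑ i, mu m ρ i = (∑ i, Real.exp (ρ i)) / (1 + ∑ i, Real.exp (ρ i)) := by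
  simp [mu, Finset.sum_div]

lemma mu_mem (ρ : Fin m → ℝ) : mu m ρ ∈ simplex m := by
  refine ⟨fun i => (mu_pos ρ i).le, ?_⟩
  rw [sum_mu, div_le_one (Tpos ρ)]
  linarith

lemma simplex_convex_comb {l l' : Fin m → ℝ} (hl : l ∈ simplex m) (hl' : l' ∈ simplex m)
    {a b : ℝ} (ha : 0 ≤ a) (hb : 0 ≤ b) (hab : a + b = 1) :
    (fun i => a * l i + b * l' i) ∈ simplex m := by
  refine ⟨fun i => ?_, ?_⟩
  · have := hl.1 i; have := hl'.1 i; positivity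
  · rw [Finset.sum_add_distrib, ← Finset.mul_sum, ← Finset.mul_sum]
    nlinarith [hl.2, hl'.2]

lemma le_one_of_mem {l : Fin m → ℝ} (hl : l ∈ simplex m) (i : Fin m) : l i ≤ 1 :=
  le_trans (Finset.single_le_sum (fun j _ => hl.1 j) (Finset.mem_univ i)) hl.2

lemma bfun_eq (l ρ : Fin m → ℝ) :
    bfun m l ρ = ((1 - ∑ i, l i) * Real.log (1 - ∑ i, l i)
        - (1 - ∑ i, l i) * Real.log (1 / (1 + ∑ i, Real.exp (ρ i))))
      + ∑ i, (l i * Real.log (l i) - l i * Real.log (mu m ρ i)) := by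
  have hT : (0:ℝ) < 1 + ∑ i, Real.exp (ρ i) := Tpos ρ
  have h2 : ∀ i, Real.log (mu m ρ i) = ρ i - Real.log (1 + ∑ j, Real.exp (ρ j)) := by
    intro i
    show Real.log (Real.exp (ρ i) / (1 + ∑ j, Real.exp (ρ j))) = _
    rw [Real.log_div (Real.exp_ne_zero _) hT.ne', Real.log_exp]
  simp only [bfun, ent, h2]
  rw [one_div, Real.log_inv, Finset.sum_sub_distrib]
  have h3 : ∑ i, l i * (ρ i - Real.log (1 + ∑ j, Real.exp (ρ j)))
      = (∑ i, ρ i * l i) - (∑ i, l i) * Real.log (1 + ∑ j, Real.exp (ρ j)) := by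
    simp only [mul_sub]
    rw [Finset.sum_sub_distrib, ← Finset.sum_mul]
    congr 1
    exact Finset.sum_congr rfl fun i _ => mul_comm _ _
  rw [h3]
  ring

lemma key_ineq : ∀ x y : ℝ, 0 ≤ x → 0 < y → x - y ≤ x * Real.log x - x * Real.log y := by
  intro x y hx hy
  rcases eq_or_lt_of_le hx with h | h
  · simp [← h]; linarith
  · have hlog : Real.log (y / x) ≤ y / x - 1 := Real.log_le_sub_one_of_pos (div_pos hy h)
    rw [Real.log_div hy.ne' h.ne'] at hlog
    have h2 : x * (y / x - 1) = y - x := by field_simp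
    have h3 : x * (Real.log y - Real.log x) ≤ x * (y / x - 1) :=
      mul_le_mul_of_nonneg_left hlog h.le
    nlinarith [h3, h2]

lemma bfun_nonneg (ρ : Fin m → ℝ) {l : Fin m → ℝ} (hl : l ∈ simplex m) : 0 ≤ bfun m l ρ := by
  have hT := Tpos ρ
  have h0 := key_ineq (1 - ∑ i, l i) (1 / (1 + ∑ i, Real.exp (ρ i)))
    (sub_nonneg.2 hl.2) (by positivity)
  have hi : ∀ i ∈ Finset.univ, l i - mu m ρ i
      ≤ l i * Real.log (l i) - l i * Real.log (mu m ρ i) :=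
    fun i _ => key_ineq _ _ (hl.1 i) (mu_pos ρ i)
  have hsum := Finset.sum_le_sum hi
  rw [Finset.sum_sub_distrib] at hsum
  have hzero : ((1 - ∑ i, l i) - 1 / (1 + ∑ i, Real.exp (ρ i)))
      + ((∑ i, l i) - ∑ i, mu m ρ i) = 0 := by
    rw [sum_mu]; field_simp; ring
  rw [bfun_eq]
  linarith [h0, hsum]

lemma bfun_mu (ρ : Fin m → ℝ) : bfun m (mu m ρ) ρ = 0 := by
  rw [bfun_eq]
  have h1 : 1 - ∑ i, mu m ρ i = 1 / (1 + ∑ i, Real.exp (ρ i)) := by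
    rw [sum_mu]; field_simp; ring
  rw [h1]; simp

lemma bfun_convex (ρ : Fin m → ℝ) {l l' : Fin m → ℝ}
    (hl : l ∈ simplex m) (hl' : l' ∈ simplex m)
    {a b : ℝ} (ha : 0 ≤ a) (hb : 0 ≤ b) (hab : a + b = 1) :
    bfun m (fun i => a * l i + b * l' i) ρ ≤ a * bfun m l ρ + b * bfun m l' ρ := by
  have cvx := Real.convexOn_mul_log
  have hsum1 : 1 - ∑ i, (a * l i + b * l' i) = a * (1 - ∑ i, l i) + b * (1 - ∑ i, l' i) := by
    rw [Finset.sum_add_distrib, ← Finset.mul_sum, ← Finset.mul_sum]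
    linear_combination -hab
  have h0 : (1 - ∑ i, (a * l i + b * l' i)) * Real.log (1 - ∑ i, (a * l i + b * l' i))
      ≤ a * ((1 - ∑ i, l i) * Real.log (1 - ∑ i, l i))
        + b * ((1 - ∑ i, l' i) * Real.log (1 - ∑ i, l' i)) := by
    rw [hsum1]
    simpa [smul_eq_mul] using
      cvx.2 (mem_Ici.2 (sub_nonneg.2 hl.2)) (mem_Ici.2 (sub_nonneg.2 hl'.2)) ha hb hab
  have hi : ∀ i ∈ Finset.univ, (a * l i + b * l' i) * Real.log (a * l i + b * l' i)
      ≤ a * (l i * Real.log (l i)) + b * (l' i * Real.log (l' i)) := by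
    intro i _
    simpa [smul_eq_mul] using
      cvx.2 (mem_Ici.2 (hl.1 i)) (mem_Ici.2 (hl'.1 i)) ha hb hab
  have hsum2 := Finset.sum_le_sum hi
  rw [Finset.sum_add_distrib, ← Finset.mul_sum, ← Finset.mul_sum] at hsum2
  have hlin : ∑ i, ρ i * (a * l i + b * l' i)
      = a * ∑ i, ρ i * l i + b * ∑ i, ρ i * l' i := by
    simp only [mul_add]
    rw [Finset.sum_add_distrib, Finset.mul_sum, Finset.mul_sum]
    congr 1 <;> exact Finset.sum_congr rfl fun i _ => by ring
  have hL : a * Real.log (1 + ∑ i, Real.exp (ρ i)) + b * Real.log (1 + ∑ i, Real.exp (ρ i))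
      = Real.log (1 + ∑ i, Real.exp (ρ i)) := by rw [← add_mul, hab, one_mul]
  simp only [bfun, ent]
  linarith [h0, hsum2, hlin, hL]

lemma bfun_half_strict (ρ : Fin m → ℝ) {l l' : Fin m → ℝ}
    (hl : l ∈ simplex m) (hl' : l' ∈ simplex m) {i₀ : Fin m} (hne : l i₀ ≠ l' i₀) :
    bfun m (fun i => (1/2) * l i + (1/2) * l' i) ρ
      < (1/2) * bfun m l ρ + (1/2) * bfun m l' ρ := by
  have cvx := Real.convexOn_mul_log
  have scvx := Real.strictConvexOn_mul_log
  have hab : (1/2 : ℝ) + 1/2 = 1 := by norm_num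
  have hsum1 : 1 - ∑ i, ((1/2) * l i + (1/2) * l' i)
      = (1/2) * (1 - ∑ i, l i) + (1/2) * (1 - ∑ i, l' i) := by
    rw [Finset.sum_add_distrib, ← Finset.mul_sum, ← Finset.mul_sum]; ring
  have h0 : (1 - ∑ i, ((1/2) * l i + (1/2) * l' i))
        * Real.log (1 - ∑ i, ((1/2) * l i + (1/2) * l' i))
      ≤ (1/2) * ((1 - ∑ i, l i) * Real.log (1 - ∑ i, l i))
        + (1/2) * ((1 - ∑ i, l' i) * Real.log (1 - ∑ i, l' i)) := by
    rw [hsum1]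
    simpa [smul_eq_mul] using
      cvx.2 (mem_Ici.2 (sub_nonneg.2 hl.2)) (mem_Ici.2 (sub_nonneg.2 hl'.2))
        (by norm_num : (0:ℝ) ≤ 1/2) (by norm_num : (0:ℝ) ≤ 1/2) hab
  have hi : ∀ i ∈ Finset.univ,
      ((1/2) * l i + (1/2) * l' i) * Real.log ((1/2) * l i + (1/2) * l' i)
      ≤ (1/2) * (l i * Real.log (l i)) + (1/2) * (l' i * Real.log (l' i)) := by
    intro i _
    simpa [smul_eq_mul] using
      cvx.2 (mem_Ici.2 (hl.1 i)) (mem_Ici.2 (hl'.1 i))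
        (by norm_num : (0:ℝ) ≤ 1/2) (by norm_num : (0:ℝ) ≤ 1/2) hab
  have hstrict : ((1/2) * l i₀ + (1/2) * l' i₀) * Real.log ((1/2) * l i₀ + (1/2) * l' i₀)
      < (1/2) * (l i₀ * Real.log (l i₀)) + (1/2) * (l' i₀ * Real.log (l' i₀)) := by
    simpa [smul_eq_mul] using
      scvx.2 (mem_Ici.2 (hl.1 i₀)) (mem_Ici.2 (hl'.1 i₀)) hne
        (by norm_num : (0:ℝ) < 1/2) (by norm_num : (0:ℝ) < 1/2) hab
  have hsum2 := Finset.sum_lt_sum hi ⟨i₀, Finset.mem_univ i₀, hstrict⟩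
  rw [Finset.sum_add_distrib, ← Finset.mul_sum, ← Finset.mul_sum] at hsum2
  have hlin : ∑ i, ρ i * ((1/2) * l i + (1/2) * l' i)
      = (1/2) * ∑ i, ρ i * l i + (1/2) * ∑ i, ρ i * l' i := by
    simp only [mul_add]
    rw [Finset.sum_add_distrib, Finset.mul_sum, Finset.mul_sum]
    congr 1 <;> exact Finset.sum_congr rfl fun i _ => by ring
  simp only [bfun, ent]
  linarith [h0, hsum2, hlin]

def Aset (m : ℕ) (t : ℝ) (ρ : Fin m → ℝ) : Set (Fin m → ℝ) :=
  {l ∈ simplex m | bfun m l ρ ≤ t}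

lemma continuous_ent : Continuous (ent m) := by
  unfold ent
  exact (Real.continuous_mul_log.comp
      (continuous_const.sub (continuous_finset_sum _ fun i _ => continuous_apply i))).add
    (continuous_finset_sum _ fun i _ => Real.continuous_mul_log.comp (continuous_apply i))

lemma continuous_bfun_l (ρ : Fin m → ℝ) : Continuous (fun l => bfun m l ρ) := by
  unfold bfun
  exact (continuous_const.add continuous_ent).sub
    (continuous_finset_sum _ fun i _ => continuous_const.mul (continuous_apply i))

lemma isClosed_simplex : IsClosed (simplex m) := by
  have h : simplex m = (⋂ i, {l : Fin m → ℝ | 0 ≤ l i}) ∩ {l | ∑ i, l i ≤ 1} := by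
    ext l; simp [simplex]
  rw [h]
  exact (isClosed_iInter fun i => isClosed_le continuous_const (continuous_apply i)).inter
    (isClosed_le (continuous_finset_sum _ fun i _ => continuous_apply i) continuous_const)

lemma isClosed_Aset (t : ℝ) (ρ : Fin m → ℝ) : IsClosed (Aset m t ρ) := by
  have h : Aset m t ρ = simplex m ∩ (fun l => bfun m l ρ) ⁻¹' (Iic t) := rfl
  rw [h]
  exact isClosed_simplex.inter (isClosed_Iic.preimage (continuous_bfun_l ρ))

lemma vol_simplex_le : volume (simplex m) ≤ 1 := by
  have hsub : simplex m ⊆ Set.pi univ (fun _ : Fin m => Icc (0:ℝ) 1) := by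
    intro l hl
    rw [Set.mem_univ_pi]
    exact fun i => ⟨hl.1 i, le_one_of_mem hl i⟩
  calc volume (simplex m) ≤ volume (Set.pi univ (fun _ : Fin m => Icc (0:ℝ) 1)) :=
        measure_mono hsub
    _ = 1 := by rw [volume_pi_pi]; simp [Real.volume_Icc]

lemma vol_Aset_ne_top (t : ℝ) (ρ : Fin m → ℝ) : volume (Aset m t ρ) ≠ ⊤ :=
  ((measure_mono (sep_subset _ _)).trans_lt (vol_simplex_le.trans_lt ENNReal.one_lt_top)).ne

lemma Aset_mono (ρ : Fin m → ℝ) {t t' : ℝ} (h : t ≤ t') : Aset m t ρ ⊆ Aset m t' ρ :=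
  fun l hl => ⟨hl.1, hl.2.trans h⟩

lemma vol_singleton (hm : 1 ≤ m) (a : Fin m → ℝ) : volume ({a} : Set (Fin m → ℝ)) = 0 := by
  have h : ({a} : Set (Fin m → ℝ)) = Set.pi univ fun i => {a i} := by
    ext x; simp [Set.mem_pi, funext_iff]
  rw [h, volume_pi_pi]
  simp [Real.volume_singleton]
  omega

lemma zero_set_subsingleton (ρ : Fin m → ℝ) : (Aset m 0 ρ).Subsingleton := by
  intro l hl l' hl'
  by_contra hne
  obtain ⟨i₀, hi₀⟩ : ∃ i, l i ≠ l' i := by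
    by_contra h; push_neg at h; exact hne (funext h)
  have hz : (fun i => (1/2 : ℝ) * l i + (1/2) * l' i) ∈ simplex m :=
    simplex_convex_comb hl.1 hl'.1 (by norm_num) (by norm_num) (by norm_num)
  have hb := bfun_half_strict ρ hl.1 hl'.1 hi₀
  have h1 := bfun_nonneg ρ hz
  have h2 := hl.2
  have h3 := hl'.2
  linarith

lemma vol_A0 (hm : 1 ≤ m) (ρ : Fin m → ℝ) : volume (Aset m 0 ρ) = 0 := by
  rcases (zero_set_subsingleton ρ).eq_empty_or_singleton with h | ⟨a, h⟩
  · rw [h]; simp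
  · rw [h]; exact vol_singleton hm a

lemma vol_scale (ρ : Fin m → ℝ) {t s : ℝ} (ht : 0 ≤ t) (hs0 : 0 < s) (hs1 : s ≤ 1) :
    ENNReal.ofReal (s ^ m) * volume (Aset m t ρ) ≤ volume (Aset m (s * t) ρ) := by
  have himg : (fun x : Fin m → ℝ => (1 - s) • mu m ρ + s • x) '' Aset m t ρ
      ⊆ Aset m (s * t) ρ := by
    rintro _ ⟨x, hx, rfl⟩
    have hmem : (fun i => (1 - s) * mu m ρ i + s * x i) ∈ simplex m :=
      simplex_convex_comb (mu_mem ρ) hx.1 (by linarith) hs0.le (by ring)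
    have hcv := bfun_convex ρ (mu_mem ρ) hx.1 (by linarith : (0:ℝ) ≤ 1 - s) hs0.le (by ring)
    rw [bfun_mu] at hcv
    refine ⟨hmem, ?_⟩
    calc bfun m ((1 - s) • mu m ρ + s • x) ρ
        = bfun m (fun i => (1 - s) * mu m ρ i + s * x i) ρ := rfl
      _ ≤ (1 - s) * 0 + s * bfun m x ρ := hcv
      _ = s * bfun m x ρ := by ring
      _ ≤ s * t := mul_le_mul_of_nonneg_left hx.2 hs0.le
  have heq : volume ((fun x : Fin m → ℝ => (1 - s) • mu m ρ + s • x) '' Aset m t ρ)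
      = ENNReal.ofReal (s ^ m) * volume (Aset m t ρ) := by
    have hcomp : (fun x : Fin m → ℝ => (1 - s) • mu m ρ + s • x) '' Aset m t ρ
        = (fun y => (1 - s) • mu m ρ + y) '' ((fun x : Fin m → ℝ => s • x) '' Aset m t ρ) := by
      rw [← Set.image_comp]; rfl
    rw [hcomp, Set.image_add_left, measure_preimage_add,
      show (fun x : Fin m → ℝ => s • x) '' Aset m t ρ = s • Aset m t ρ from rfl,
      Measure.addHaar_smul]
    congr 2
    rw [show Module.finrank ℝ (Fin m → ℝ) = m by simp]
    exact abs_of_nonneg (pow_nonneg hs0.le m)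
  rw [← heq]
  exact measure_mono himg

lemma right_cont (ρ : Fin m → ℝ) (t₀ : ℝ) :
    Tendsto (fun n : ℕ => volume (Aset m (t₀ + 1 / (n + 1)) ρ)) atTop
      (𝓝 (volume (Aset m t₀ ρ))) := by
  have h1 : ∀ n : ℕ, NullMeasurableSet (Aset m (t₀ + 1 / (n + 1)) ρ) volume :=
    fun n => (isClosed_Aset _ ρ).measurableSet.nullMeasurableSet
  have h2 : Antitone fun n : ℕ => Aset m (t₀ + 1 / ((n : ℝ) + 1)) ρ := by
    intro n n' h
    refine Aset_mono ρ (add_le_add (le_refl t₀) ?_)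
    exact one_div_le_one_div_of_le (by positivity)
      (add_le_add (Nat.cast_le.2 h) (le_refl 1))
  have h3 : ⋂ n : ℕ, Aset m (t₀ + 1 / ((n : ℝ) + 1)) ρ = Aset m t₀ ρ := by
    ext l
    simp only [mem_iInter]
    constructor
    · intro h
      refine ⟨(h 0).1, ?_⟩
      by_contra hlt
      push_neg at hlt
      obtain ⟨n, hn⟩ := exists_nat_one_div_lt (sub_pos.2 hlt)
      exact absurd (h n).2 (by push_cast at hn ⊢; linarith)
    · intro h n
      exact ⟨h.1, h.2.trans (le_add_of_nonneg_right (by positivity))⟩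
  have := tendsto_measure_iInter_atTop h1 h2 ⟨0, vol_Aset_ne_top _ ρ⟩
  rw [h3] at this
  exact this

lemma gcont (hm : 1 ≤ m) (ρ : Fin m → ℝ) {t₀ : ℝ} (ht₀ : 0 ≤ t₀) :
    ContinuousAt (fun t => (volume (Aset m t ρ)).toReal) t₀ := by
  set g : ℝ → ℝ := fun t => (volume (Aset m t ρ)).toReal with hgdef
  have gmono : Monotone g := fun t t' h =>
    ENNReal.toReal_mono (vol_Aset_ne_top t' ρ) (measure_mono (Aset_mono ρ h))
  rw [Metric.continuousAt_iff]
  intro ε hε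
  have hR : ∃ δR > 0, g (t₀ + δR) < g t₀ + ε := by
    have h := (ENNReal.tendsto_toReal (vol_Aset_ne_top t₀ ρ)).comp (right_cont ρ t₀)
    have h2 : ∀ᶠ n : ℕ in atTop, g (t₀ + 1 / ((n : ℝ) + 1)) < g t₀ + ε :=
      h.eventually_lt_const (by linarith)
    obtain ⟨n, hn⟩ := h2.exists
    exact ⟨1 / ((n : ℝ) + 1), by positivity, hn⟩
  obtain ⟨δR, hδR, hgR⟩ := hR
  have hL : ∃ δL > 0, g t₀ - ε < g (t₀ - δL) := by
    rcases eq_or_lt_of_le ht₀ with h0 | h0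
    · have hg0 : g t₀ = 0 := by
        rw [hgdef]; simp only [← h0]; rw [vol_A0 hm ρ]; simp
      refine ⟨1, one_pos, ?_⟩
      have := ENNReal.toReal_nonneg (a := volume (Aset m (t₀ - 1) ρ))
      rw [hg0]
      linarith [this]
    · have h1 : Tendsto (fun n : ℕ => (1 : ℝ) - 1 / ((n : ℝ) + 2)) atTop (𝓝 1) := by
        have hz : Tendsto (fun n : ℕ => 1 / ((n : ℝ) + 2)) atTop (𝓝 0) := by
          have := (tendsto_one_div_add_atTop_nhds_zero_nat (𝕜 := ℝ)).comp (tendsto_add_atTop_nat 1)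
          convert this using 2 with n
          simp [Function.comp]
          push_cast
          ring
        simpa using tendsto_const_nhds.sub hz
      have htend : Tendsto (fun n : ℕ => ((1 : ℝ) - 1 / ((n : ℝ) + 2)) ^ m * g t₀) atTop
          (𝓝 (g t₀)) := by
        have h2 := (h1.pow m).mul_const (g t₀)
        simpa using h2
      have hev := htend.eventually_const_lt (by linarith : g t₀ - ε < g t₀)
      obtain ⟨n, hn⟩ := hev.exists
      set s : ℝ := 1 - 1 / ((n : ℝ) + 2) with hsdef
      have hfrac : (0:ℝ) < 1 / ((n : ℝ) + 2) := by positivity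
      have hfrac1 : (1:ℝ) / ((n : ℝ) + 2) < 1 := by
        rw [div_lt_one (by positivity)]
        have := Nat.cast_nonneg (α := ℝ) n
        linarith
      have hs0 : 0 < s := by rw [hsdef]; linarith
      have hs1 : s ≤ 1 := by rw [hsdef]; linarith
      have hpos : 0 < t₀ - s * t₀ := by
        have hts0 : t₀ - s * t₀ = (1 / ((n : ℝ) + 2)) * t₀ := by rw [hsdef]; ring
        rw [hts0]; positivity
      refine ⟨t₀ - s * t₀, hpos, ?_⟩
      have hkey := vol_scale ρ h0.le hs0 hs1
      have hts : s ^ m * g t₀ ≤ g (s * t₀) := by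
        have h4 := ENNReal.toReal_mono (vol_Aset_ne_top (s * t₀) ρ) hkey
        rw [ENNReal.toReal_mul, ENNReal.toReal_ofReal (by positivity)] at h4
        exact h4
      have harg : t₀ - (t₀ - s * t₀) = s * t₀ := by ring
      rw [harg]
      linarith
  obtain ⟨δL, hδL, hgL⟩ := hL
  refine ⟨min δR δL, lt_min hδR hδL, ?_⟩
  intro t ht
  rw [Real.dist_eq] at ht ⊢
  have habs := abs_lt.1 ht
  have h1 : t ≤ t₀ + δR := by
    have := min_le_left δR δL; linarith [habs.2]
  have h2 : t₀ - δL ≤ t := by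
    have := min_le_right δR δL; linarith [habs.1]
  have hm1 := gmono h1
  have hm2 := gmono h2
  rw [abs_lt]
  constructor <;> linarith

def cfun (m : ℕ) (ρ₀ ρ : Fin m → ℝ) : ℝ :=
  |Real.log (1 + ∑ i, Real.exp (ρ i)) - Real.log (1 + ∑ i, Real.exp (ρ₀ i))|
    + ∑ i, |ρ i - ρ₀ i|

lemma cfun_self (ρ₀ : Fin m → ℝ) : cfun m ρ₀ ρ₀ = 0 := by simp [cfun]

lemma cfun_contAt (ρ₀ : Fin m → ℝ) : ContinuousAt (fun ρ => cfun m ρ₀ ρ) ρ₀ := by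
  apply ContinuousAt.add
  · apply ContinuousAt.abs
    apply ContinuousAt.sub _ continuousAt_const
    have hcont : ContinuousAt (fun ρ : Fin m → ℝ => 1 + ∑ i, Real.exp (ρ i)) ρ₀ :=
      (continuous_const.add (continuous_finset_sum _ fun i _ =>
        Real.continuous_exp.comp (continuous_apply i))).continuousAt
    exact hcont.log (Tpos ρ₀).ne' 
  · exact (continuous_finset_sum _ fun i _ =>
      ((continuous_apply i).sub continuous_const).abs).continuousAt

lemma bfun_diff_bound (ρ₀ ρ : Fin m → ℝ) {l : Fin m → ℝ} (hl : l ∈ simplex m) :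
    |bfun m l ρ - bfun m l ρ₀| ≤ cfun m ρ₀ ρ := by
  have hdiff : bfun m l ρ - bfun m l ρ₀
      = (Real.log (1 + ∑ i, Real.exp (ρ i)) - Real.log (1 + ∑ i, Real.exp (ρ₀ i)))
        - ∑ i, (ρ i - ρ₀ i) * l i := by
    simp only [bfun, sub_mul, Finset.sum_sub_distrib]
    ring
  rw [hdiff, cfun]
  have h1 : |(Real.log (1 + ∑ i, Real.exp (ρ i)) - Real.log (1 + ∑ i, Real.exp (ρ₀ i)))
      - ∑ i, (ρ i - ρ₀ i) * l i|
      ≤ |Real.log (1 + ∑ i, Real.exp (ρ i)) - Real.log (1 + ∑ i, Real.exp (ρ₀ i))|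
        + |∑ i, (ρ i - ρ₀ i) * l i| := by
    have h := abs_add_le (Real.log (1 + ∑ i, Real.exp (ρ i))
      - Real.log (1 + ∑ i, Real.exp (ρ₀ i))) (-(∑ i, (ρ i - ρ₀ i) * l i))
    rw [abs_neg] at h
    simpa [sub_eq_add_neg] using h
  have h2 : |∑ i, (ρ i - ρ₀ i) * l i| ≤ ∑ i, |ρ i - ρ₀ i| := by
    calc |∑ i, (ρ i - ρ₀ i) * l i| ≤ ∑ i, |(ρ i - ρ₀ i) * l i| :=
          Finset.abs_sum_le_sum_abs _ _
      _ ≤ ∑ i, |ρ i - ρ₀ i| := by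
          refine Finset.sum_le_sum fun i _ => ?_
          rw [abs_mul]
          calc |ρ i - ρ₀ i| * |l i| ≤ |ρ i - ρ₀ i| * 1 := by
                refine mul_le_mul_of_nonneg_left ?_ (abs_nonneg _)
                rw [abs_of_nonneg (hl.1 i)]
                exact le_one_of_mem hl i
            _ = |ρ i - ρ₀ i| := mul_one _
  linarith

end DAux

/-- D is continuous on [0,∞) × ℝ^m. -/
theorem D_continuousOn (m : ℕ) (hm : 1 ≤ m) :
    ContinuousOn (fun q : ℝ × (Fin m → ℝ) => Dfun m q.1 q.2)
      (Set.Ici (0 : ℝ) ×ˢ (Set.univ : Set (Fin m → ℝ))) := by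
  rintro ⟨t₀, ρ₀⟩ ⟨ht₀, -⟩
  classical
  set g : ℝ → ℝ := fun t => (volume (DAux.Aset m t ρ₀)).toReal with hgdef
  have hg : ContinuousAt g t₀ := DAux.gcont hm ρ₀ ht₀
  have hmap_lo : Tendsto (fun q : ℝ × (Fin m → ℝ) => q.1 - DAux.cfun m ρ₀ q.2)
      (𝓝[Set.Ici (0 : ℝ) ×ˢ (Set.univ : Set (Fin m → ℝ))] (t₀, ρ₀)) (𝓝 t₀) := by
    have hca : ContinuousAt (fun q : ℝ × (Fin m → ℝ) => q.1 - DAux.cfun m ρ₀ q.2) (t₀, ρ₀) :=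
      continuousAt_fst.sub (by have h := (DAux.cfun_contAt ρ₀).comp (x := ((t₀, ρ₀) : ℝ × (Fin m → ℝ))) (f := Prod.snd) continuousAt_snd; exact h)
    have h2 := hca.tendsto
    rw [DAux.cfun_self, sub_zero] at h2
    exact h2.mono_left nhdsWithin_le_nhds
  have hmap_hi : Tendsto (fun q : ℝ × (Fin m → ℝ) => q.1 + DAux.cfun m ρ₀ q.2)
      (𝓝[Set.Ici (0 : ℝ) ×ˢ (Set.univ : Set (Fin m → ℝ))] (t₀, ρ₀)) (𝓝 t₀) := by
    have hca : ContinuousAt (fun q : ℝ × (Fin m → ℝ) => q.1 + DAux.cfun m ρ₀ q.2) (t₀, ρ₀) :=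
      continuousAt_fst.add (by have h := (DAux.cfun_contAt ρ₀).comp (x := ((t₀, ρ₀) : ℝ × (Fin m → ℝ))) (f := Prod.snd) continuousAt_snd; exact h)
    have h2 := hca.tendsto
    rw [DAux.cfun_self, add_zero] at h2
    exact h2.mono_left nhdsWithin_le_nhds
  have hlo : Tendsto (fun q : ℝ × (Fin m → ℝ) =>
      (m.factorial : ℝ) * g (q.1 - DAux.cfun m ρ₀ q.2))
      (𝓝[Set.Ici (0 : ℝ) ×ˢ (Set.univ : Set (Fin m → ℝ))] (t₀, ρ₀))
      (𝓝 ((m.factorial : ℝ) * g t₀)) :=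
    tendsto_const_nhds.mul (hg.tendsto.comp hmap_lo)
  have hhi : Tendsto (fun q : ℝ × (Fin m → ℝ) =>
      (m.factorial : ℝ) * g (q.1 + DAux.cfun m ρ₀ q.2))
      (𝓝[Set.Ici (0 : ℝ) ×ˢ (Set.univ : Set (Fin m → ℝ))] (t₀, ρ₀))
      (𝓝 ((m.factorial : ℝ) * g t₀)) :=
    tendsto_const_nhds.mul (hg.tendsto.comp hmap_hi)
  have hineq : ∀ q : ℝ × (Fin m → ℝ),
      (m.factorial : ℝ) * g (q.1 - DAux.cfun m ρ₀ q.2) ≤ Dfun m q.1 q.2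
      ∧ Dfun m q.1 q.2 ≤ (m.factorial : ℝ) * g (q.1 + DAux.cfun m ρ₀ q.2) := by
    rintro ⟨t, ρ⟩
    have hsub1 : DAux.Aset m (t - DAux.cfun m ρ₀ ρ) ρ₀ ⊆ DAux.Aset m t ρ := by
      rintro l ⟨hl, hb⟩
      refine ⟨hl, ?_⟩
      have habs := abs_le.1 (DAux.bfun_diff_bound ρ₀ ρ hl)
      linarith [habs.2]
    have hsub2 : DAux.Aset m t ρ ⊆ DAux.Aset m (t + DAux.cfun m ρ₀ ρ) ρ₀ := by
      rintro l ⟨hl, hb⟩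
      refine ⟨hl, ?_⟩
      have habs := abs_le.1 (DAux.bfun_diff_bound ρ₀ ρ hl)
      linarith [habs.1]
    have hD : Dfun m t ρ = (m.factorial : ℝ) * (volume (DAux.Aset m t ρ)).toReal := rfl
    constructor
    · rw [hD]
      refine mul_le_mul_of_nonneg_left ?_ (Nat.cast_nonneg _)
      exact ENNReal.toReal_mono (DAux.vol_Aset_ne_top t ρ) (measure_mono hsub1)
    · rw [hD]
      refine mul_le_mul_of_nonneg_left ?_ (Nat.cast_nonneg _)
      exact ENNReal.toReal_mono (DAux.vol_Aset_ne_top _ ρ₀) (measure_mono hsub2)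
  have hDval : Dfun m t₀ ρ₀ = (m.factorial : ℝ) * g t₀ := rfl
  show Tendsto (fun q : ℝ × (Fin m → ℝ) => Dfun m q.1 q.2)
    (𝓝[Set.Ici (0 : ℝ) ×ˢ (Set.univ : Set (Fin m → ℝ))] (t₀, ρ₀)) (𝓝 (Dfun m t₀ ρ₀))
  rw [hDval]
  exact tendsto_of_tendsto_of_tendsto_of_le_of_le hlo hhi
    (fun q => (hineq q).1) (fun q => (hineq q).2)
end
end

section
/- Fix ρ ∈ ℝ and x ∈ {0,1}. Then there exists δ > 0 such that for every s ∈ (0,δ] there exists s̃(s) ∈ [0,1] with B(s,ρ,x) = B(s̃(s),ρ,1−x); moreover, lim_{s→0⁺} s̃(s)/s = e^{ρ} if x = 0, and lim_{s→0⁺} s̃(s)/s = e^{−ρ} if x = 1. -/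
open MeasureTheory Real Filter Set

noncomputable section

/-- m = 1: μ(ρ) = e^ρ/(1+e^ρ). -/
def mu1 (ρ : ℝ) : ℝ := Real.exp ρ / (1 + Real.exp ρ)

/-- m = 1: b(λ,ρ) = λ log λ + (1−λ) log(1−λ) − λρ + log(1+e^ρ).
Note `Real.log 0 = 0`, so the convention 0·log 0 = 0 holds. -/
def b1 (l ρ : ℝ) : ℝ :=
  l * Real.log l + (1 - l) * Real.log (1 - l) - l * ρ + Real.log (1 + Real.exp ρ)

/-- m = 1: B(s,ρ,x) = b((1−s)μ(ρ) + s x, ρ). -/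
def B1 (s ρ x : ℝ) : ℝ := b1 ((1 - s) * mu1 ρ + s * x) ρ

lemma mu_mem (ρ : ℝ) : mu1 ρ ∈ Ioo (0:ℝ) 1 := by
  have h1 : (0:ℝ) < Real.exp ρ := Real.exp_pos ρ
  constructor
  · exact div_pos h1 (by linarith)
  · rw [mu1, div_lt_one (by linarith)]; linarith

lemma one_sub_mu (ρ : ℝ) : 1 - mu1 ρ = 1 / (1 + Real.exp ρ) := by
  have h1 : (0:ℝ) < Real.exp ρ := Real.exp_pos ρ
  unfold mu1
  field_simp
  ring

lemma log_mu (ρ : ℝ) : Real.log (mu1 ρ) = ρ - Real.log (1 + Real.exp ρ) := by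
  have h1 : (0:ℝ) < Real.exp ρ := Real.exp_pos ρ
  rw [mu1, Real.log_div (by positivity) (by positivity), Real.log_exp]

lemma log_one_sub_mu (ρ : ℝ) : Real.log (1 - mu1 ρ) = - Real.log (1 + Real.exp ρ) := by
  have h1 : (0:ℝ) < Real.exp ρ := Real.exp_pos ρ
  rw [one_sub_mu, Real.log_div (by norm_num) (by positivity), Real.log_one]; ring

lemma log_mu_sub (ρ : ℝ) : Real.log (mu1 ρ) - Real.log (1 - mu1 ρ) = ρ := by
  rw [log_mu, log_one_sub_mu]; ring

lemma b1_mu (ρ : ℝ) : b1 (mu1 ρ) ρ = 0 := by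
  rw [b1, log_mu, log_one_sub_mu]; ring

lemma b1_hasDerivAt (ρ : ℝ) {l : ℝ} (hl : l ∈ Ioo (0:ℝ) 1) :
    HasDerivAt (fun l => b1 l ρ) (Real.log l - Real.log (1 - l) - ρ) l := by
  obtain ⟨h0, h1⟩ := hl
  have hd1 : HasDerivAt (fun l : ℝ => l * Real.log l) (Real.log l + 1) l := by
    have := (hasDerivAt_id l).fun_mul (Real.hasDerivAt_log (ne_of_gt h0))
    simp only [id] at this
    refine this.congr_deriv ?_
    field_simp
  have hd2 : HasDerivAt (fun l : ℝ => (1 - l) * Real.log (1 - l))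
      (-(Real.log (1 - l) + 1)) l := by
    have hsub : HasDerivAt (fun l : ℝ => 1 - l) (-1) l := by
      simpa using (hasDerivAt_const l (1:ℝ)).fun_sub (hasDerivAt_id l)
    have hne : (1:ℝ) - l ≠ 0 := by linarith
    have := ((hasDerivAt_id (1 - l)).fun_mul
      (Real.hasDerivAt_log hne)).comp l hsub
    refine this.congr_deriv ?_
    simp only [id]
    field_simp
  have hd3 : HasDerivAt (fun l : ℝ => l * ρ) ρ l := by
    simpa using (hasDerivAt_id l).mul_const ρ
  have := ((hd1.fun_add hd2).fun_sub hd3).add_const (Real.log (1 + Real.exp ρ))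
  refine this.congr_deriv ?_
  ring

lemma b1_continuous (ρ : ℝ) : Continuous (fun l => b1 l ρ) := by
  unfold b1
  have h1 : Continuous fun l : ℝ => l * Real.log l := Real.continuous_mul_log
  have h2 : Continuous fun l : ℝ => (1 - l) * Real.log (1 - l) :=
    Real.continuous_mul_log.comp (by continuity)
  continuity

lemma b1_quad (ρ : ℝ) :
    Filter.Tendsto (fun h => b1 (mu1 ρ + h) ρ / h^2) (nhdsWithin 0 {(0:ℝ)}ᶜ)
      (nhds ((1 / mu1 ρ + 1 / (1 - mu1 ρ)) / 2)) := by
  obtain ⟨hμ0, hμ1⟩ := mu_mem ρ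
  set μ := mu1 ρ with hμdef
  set N : ℝ → ℝ := fun h => Real.log (μ + h) - Real.log (1 - (μ + h)) - ρ with hNdef
  -- derivative of N at points near 0
  have hNderiv : ∀ h : ℝ, μ + h ∈ Ioo (0:ℝ) 1 →
      HasDerivAt N (1 / (μ + h) + 1 / (1 - (μ + h))) h := by
    intro h hh
    obtain ⟨ha, hb⟩ := hh
    have h1 : HasDerivAt (fun t : ℝ => μ + t) 1 h := by
      simpa using (hasDerivAt_id h).const_add μ
    have h2 : HasDerivAt (fun t : ℝ => Real.log (μ + t)) (1/(μ + h)) h := by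
      have := (Real.hasDerivAt_log (ne_of_gt ha)).comp h h1
      refine this.congr_deriv ?_
      simp [one_div]
    have h3 : HasDerivAt (fun t : ℝ => Real.log (1 - (μ + t))) (-(1/(1 - (μ + h)))) h := by
      have hs : HasDerivAt (fun t : ℝ => 1 - (μ + t)) (-1) h := by
        simpa using (hasDerivAt_const h (1:ℝ)).fun_sub h1
      have := (Real.hasDerivAt_log (ne_of_gt (by linarith : (0:ℝ) < 1 - (μ + h)))).comp h hs
      refine this.congr_deriv ?_
      simp [one_div]
    have := (h2.fun_sub h3).sub_const ρ
    refine this.congr_deriv ?_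
    ring
  have hN0 : N 0 = 0 := by
    simp only [hNdef, add_zero]
    rw [hμdef, log_mu_sub]
    ring
  -- N h / h → N'(0)
  have hslope : Filter.Tendsto (fun h => N h / h) (nhdsWithin 0 {(0:ℝ)}ᶜ)
      (nhds (1 / μ + 1 / (1 - μ))) := by
    have h0 : HasDerivAt N (1 / μ + 1 / (1 - μ)) 0 := by
      have := hNderiv 0 (by simpa using ⟨hμ0, hμ1⟩)
      simpa using this
    have := hasDerivAt_iff_tendsto_slope.mp h0
    refine this.congr (fun h => ?_)
    simp [slope, hN0, div_eq_inv_mul]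
  -- eventually near 0, μ + h ∈ Ioo 0 1
  have hev : ∀ᶠ h in nhds (0:ℝ), μ + h ∈ Ioo (0:ℝ) 1 := by
    have : Filter.Tendsto (fun h : ℝ => μ + h) (nhds 0) (nhds μ) := by
      simpa using (continuous_const.fun_add continuous_id).tendsto (0:ℝ)
    exact this (Ioo_mem_nhds hμ0 hμ1)
  have hev' : ∀ᶠ h in nhdsWithin (0:ℝ) {(0:ℝ)}ᶜ, μ + h ∈ Ioo (0:ℝ) 1 :=
    eventually_nhdsWithin_of_eventually_nhds hev
  -- L'Hopital
  refine HasDerivAt.lhopital_zero_nhdsNE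
    (f' := N) (g' := fun h => 2 * h) ?_ ?_ ?_ ?_ ?_ ?_
  · exact hev'.mono (fun h hh => by
      have hF : HasDerivAt (fun l => b1 l ρ) (Real.log (μ+h) - Real.log (1-(μ+h)) - ρ) (μ+h) :=
        b1_hasDerivAt ρ hh
      have hc : HasDerivAt (fun t : ℝ => μ + t) 1 h := by
        simpa using (hasDerivAt_id h).const_add μ
      have := hF.comp h hc
      refine this.congr_deriv ?_
      simp [hNdef])
  · exact Filter.Eventually.of_forall (fun h => by
      simpa [mul_comm] using (hasDerivAt_pow 2 h))
  · filter_upwards [self_mem_nhdsWithin] with h hh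
    simp only [Set.mem_compl_iff, Set.mem_singleton_iff] at hh
    intro hc
    apply hh
    linarith [mul_eq_zero.mp hc]
  · -- b1 (μ + h) ρ → 0
    have hcont : Filter.Tendsto (fun h : ℝ => b1 (μ + h) ρ) (nhds 0) (nhds (b1 μ ρ)) := by
      have : Continuous (fun h : ℝ => b1 (μ + h) ρ) :=
        (b1_continuous ρ).comp (continuous_const.add continuous_id)
      simpa using this.tendsto (0:ℝ)
    rw [hμdef, b1_mu] at hcont
    exact hcont.mono_left nhdsWithin_le_nhds
  · have : Filter.Tendsto (fun h : ℝ => h^2) (nhds 0) (nhds 0) := by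
      have := (continuous_pow 2).tendsto (0:ℝ)
      simpa using this
    exact this.mono_left nhdsWithin_le_nhds
  · -- N h / (2h) → (1/μ + 1/(1-μ))/2
    have := hslope.div_const 2
    refine this.congr (fun h => ?_)
    rw [div_div]
    ring_nf

lemma b1_strictMonoOn (ρ : ℝ) :
    StrictMonoOn (fun l => b1 l ρ) (Icc (mu1 ρ) ((1 + mu1 ρ)/2)) := by
  obtain ⟨hμ0, hμ1⟩ := mu_mem ρ
  apply strictMonoOn_of_deriv_pos (convex_Icc _ _) (b1_continuous ρ).continuousOn
  intro l hl
  rw [interior_Icc] at hl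
  obtain ⟨h1, h2⟩ := hl
  have hl01 : l ∈ Ioo (0:ℝ) 1 := ⟨by linarith, by linarith⟩
  rw [(b1_hasDerivAt ρ hl01).deriv]
  have ha : Real.log (mu1 ρ) < Real.log l := Real.log_lt_log hμ0 h1
  have hb : Real.log (1 - l) < Real.log (1 - mu1 ρ) :=
    Real.log_lt_log (by linarith) (by linarith)
  have := log_mu_sub ρ
  linarith

lemma b1_strictAntiOn (ρ : ℝ) :
    StrictAntiOn (fun l => b1 l ρ) (Icc (mu1 ρ / 2) (mu1 ρ)) := by
  obtain ⟨hμ0, hμ1⟩ := mu_mem ρ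
  apply strictAntiOn_of_deriv_neg (convex_Icc _ _) (b1_continuous ρ).continuousOn
  intro l hl
  rw [interior_Icc] at hl
  obtain ⟨h1, h2⟩ := hl
  have hl01 : l ∈ Ioo (0:ℝ) 1 := ⟨by linarith, by linarith⟩
  rw [(b1_hasDerivAt ρ hl01).deriv]
  have ha : Real.log l < Real.log (mu1 ρ) := Real.log_lt_log (by linarith) h2
  have hb : Real.log (1 - mu1 ρ) < Real.log (1 - l) :=
    Real.log_lt_log (by linarith) (by linarith)
  have := log_mu_sub ρ
  linarith

lemma master (f : ℝ → ℝ) (μ α β T L : ℝ) (hT : 0 < T) (hT1 : T ≤ 1)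
    (hmono : StrictMonoOn (fun t => f (μ + β * t)) (Icc 0 T))
    (hcont : ContinuousOn (fun t => f (μ + β * t)) (Icc 0 T))
    (hfμ : f μ = 0)
    (hquad : Filter.Tendsto (fun h => f (μ + h) / h^2) (nhdsWithin 0 {(0:ℝ)}ᶜ) (nhds L))
    (hL : 0 < L) (hα : α ≠ 0) (hβ : β ≠ 0) :
    ∃ δ > (0:ℝ), ∃ st : ℝ → ℝ,
      (∀ s ∈ Ioc (0:ℝ) δ, st s ∈ Icc (0:ℝ) 1 ∧ f (μ + α * s) = f (μ + β * st s)) ∧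
      Filter.Tendsto (fun s => st s / s) (nhdsWithin 0 (Ioc (0:ℝ) δ)) (nhds (|α| / |β|)) := by
  -- composed quadratic limits
  have hc : ∀ c : ℝ, c ≠ 0 → Filter.Tendsto (fun s => f (μ + c * s) / s^2)
      (nhdsWithin 0 (Ioi (0:ℝ))) (nhds (L * c^2)) := by
    intro c hcne
    have hmap : Filter.Tendsto (fun s : ℝ => c * s) (nhdsWithin 0 (Ioi (0:ℝ)))
        (nhdsWithin 0 {(0:ℝ)}ᶜ) := by
      rw [tendsto_nhdsWithin_iff]
      constructor
      · have : Filter.Tendsto (fun s : ℝ => c * s) (nhds 0) (nhds (c * 0)) :=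
          (continuous_const.mul continuous_id).tendsto 0
        simpa using this.mono_left nhdsWithin_le_nhds
      · filter_upwards [self_mem_nhdsWithin] with s hs
        simp only [Set.mem_compl_iff, Set.mem_singleton_iff]
        exact mul_ne_zero hcne (ne_of_gt hs)
    have hcomp := (hquad.comp hmap).mul_const (c^2)
    have heq : (fun k => ((fun h => f (μ + h) / h ^ 2) ∘ fun s => c * s) k * c ^ 2)
        =ᶠ[nhdsWithin 0 (Ioi (0:ℝ))] (fun s => f (μ + c * s) / s^2) := by
      filter_upwards [self_mem_nhdsWithin] with s hs
      have hs0 : s ≠ 0 := ne_of_gt hs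
      simp only [Function.comp]
      field_simp
    exact hcomp.congr' heq
  -- g T > 0 where g t = f (μ + β t)
  have hg0 : f (μ + β * 0) = 0 := by simpa using hfμ
  have hgT : 0 < f (μ + β * T) := by
    have := hmono (Set.left_mem_Icc.mpr hT.le) (Set.right_mem_Icc.mpr hT.le) hT
    simpa [hfμ] using this
  -- eventually positive and below g T
  have hαq := hc α hα
  have hLα : 0 < L * α^2 := by positivity
  have hEpos : ∀ᶠ s in nhdsWithin 0 (Ioi (0:ℝ)), 0 < f (μ + α * s) := by
    have h1 : ∀ᶠ s in nhdsWithin 0 (Ioi (0:ℝ)), 0 < f (μ + α * s) / s^2 :=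
      tendsto_const_nhds.eventually_lt hαq hLα
    filter_upwards [h1, self_mem_nhdsWithin] with s hs1 hs2
    rcases div_pos_iff.mp hs1 with ⟨h, _⟩ | ⟨_, h⟩
    · exact h
    · nlinarith [mem_Ioi.mp hs2]
  have hEto0 : Filter.Tendsto (fun s => f (μ + α * s)) (nhdsWithin 0 (Ioi (0:ℝ))) (nhds 0) := by
    have hsq : Filter.Tendsto (fun s : ℝ => s^2) (nhdsWithin 0 (Ioi (0:ℝ))) (nhds 0) := by
      have := (continuous_pow 2).tendsto (0:ℝ)
      simpa using this.mono_left nhdsWithin_le_nhds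
    have := hαq.mul hsq
    rw [mul_zero] at this
    refine this.congr' ?_
    filter_upwards [self_mem_nhdsWithin] with s hs
    have hs0 : s ≠ 0 := ne_of_gt hs
    field_simp
  have hElt : ∀ᶠ s in nhdsWithin 0 (Ioi (0:ℝ)), f (μ + α * s) < f (μ + β * T) :=
    hEto0.eventually_lt tendsto_const_nhds hgT
  -- extract δ
  obtain ⟨δ, hδpos, hδsub⟩ := mem_nhdsGT_iff_exists_Ioc_subset.mp (hEpos.and hElt)
  rw [Set.mem_Ioi] at hδpos
  -- define st
  classical
  set st : ℝ → ℝ := fun s =>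
    if hs : ∃ t, t ∈ Icc (0:ℝ) T ∧ f (μ + β * t) = f (μ + α * s) then hs.choose else 0 with hstdef
  have hst : ∀ s ∈ Ioc (0:ℝ) δ, st s ∈ Icc (0:ℝ) T ∧ f (μ + β * st s) = f (μ + α * s) := by
    intro s hs
    obtain ⟨hpos, hlt⟩ := hδsub hs
    have hmem : f (μ + α * s) ∈ Icc (f (μ + β * 0)) (f (μ + β * T)) := by
      rw [hg0]; exact ⟨hpos.le, hlt.le⟩
    obtain ⟨t, ht, hgt⟩ := intermediate_value_Icc hT.le hcont hmem
    have hex : ∃ t, t ∈ Icc (0:ℝ) T ∧ f (μ + β * t) = f (μ + α * s) := ⟨t, ht, hgt⟩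
    rw [hstdef]
    simp only [dif_pos hex]
    exact hex.choose_spec
  refine ⟨δ, hδpos, st, fun s hs => ⟨⟨(hst s hs).1.1, le_trans (hst s hs).1.2 hT1⟩,
    ((hst s hs).2).symm⟩, ?_⟩
  -- the limit
  set K := |α| / |β| with hKdef
  have hKpos : 0 < K := div_pos (abs_pos.mpr hα) (abs_pos.mpr hβ)
  have hmono_le : nhdsWithin (0:ℝ) (Ioc (0:ℝ) δ) ≤ nhdsWithin 0 (Ioi (0:ℝ)) :=
    nhdsWithin_mono 0 Set.Ioc_subset_Ioi_self
  -- a reusable comparison step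
  have key : ∀ c' : ℝ, 0 < c' →
      (∀ᶠ s in nhdsWithin (0:ℝ) (Ioc (0:ℝ) δ), c' * s ≤ T ∧ s ∈ Ioc (0:ℝ) δ) := by
    intro c' hc'
    have h1 : ∀ᶠ s in nhds (0:ℝ), s < T / c' := by
      apply Filter.Tendsto.eventually_lt_const (by positivity : (0:ℝ) < T / c') tendsto_id
    have h2 : ∀ᶠ s in nhdsWithin (0:ℝ) (Ioc (0:ℝ) δ), s < T / c' :=
      (h1.filter_mono nhdsWithin_le_nhds)
    filter_upwards [h2, self_mem_nhdsWithin] with s hs1 hs2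
    refine ⟨?_, hs2⟩
    rw [← le_div_iff₀' hc']
    exact hs1.le
  rw [tendsto_order]
  constructor
  · -- lower bound
    intro cl hcl
    set c'' := (max cl 0 + K) / 2 with hc''def
    have hmax : max cl 0 < K := max_lt hcl hKpos
    have hc''pos : 0 < c'' := by
      have : (0:ℝ) ≤ max cl 0 := le_max_right _ _
      rw [hc''def]; linarith
    have hc''K : c'' < K := by rw [hc''def]; linarith
    have hcl_lt : cl < c'' := by
      have : cl ≤ max cl 0 := le_max_left _ _
      rw [hc''def]; linarith
    -- L (β c'')² < L α²
    have hcmp : L * (β * c'')^2 < L * α^2 := by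
      have h1 : |β| * c'' < |α| := by
        rw [hKdef] at hc''K
        calc |β| * c'' < |β| * K := by
              exact mul_lt_mul_of_pos_left hc''K (abs_pos.mpr hβ)
          _ = |α| := by rw [hKdef]; field_simp [(abs_pos.mpr hβ).ne']
      have h2 : (β * c'')^2 < α^2 := by
        have hb1 : (0:ℝ) ≤ |β| * c'' := by positivity
        have := mul_self_lt_mul_self hb1 h1
        calc (β * c'')^2 = (|β| * c'')^2 := by
              rw [mul_pow, mul_pow, sq_abs]
          _ < α^2 := by rw [← sq_abs α]; nlinarith
      nlinarith
    have hEV := (hc (β * c'') (mul_ne_zero hβ (ne_of_gt hc''pos))).eventually_lt hαq hcmp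
    have hEV' : ∀ᶠ s in nhdsWithin (0:ℝ) (Ioc (0:ℝ) δ),
        f (μ + (β * c'') * s) / s^2 < f (μ + α * s) / s^2 := hEV.filter_mono hmono_le
    filter_upwards [hEV', key c'' hc''pos] with s hs1 hs2
    obtain ⟨hc''sT, hsmem⟩ := hs2
    obtain ⟨hspos, hsδ⟩ := hsmem
    have hs2pos : (0:ℝ) < s^2 := by positivity
    have hflt : f (μ + β * (c'' * s)) < f (μ + β * st s) := by
      have := mul_lt_mul_of_pos_right hs1 hs2pos
      rw [div_mul_cancel₀ _ (ne_of_gt hs2pos), div_mul_cancel₀ _ (ne_of_gt hs2pos)] at this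
      rw [← (hst s ⟨hspos, hsδ⟩).2, mul_assoc] at this
      exact this
    have hmemc : c'' * s ∈ Icc (0:ℝ) T := ⟨by positivity, hc''sT⟩
    have := (hmono.lt_iff_lt hmemc (hst s ⟨hspos, hsδ⟩).1).mp hflt
    calc cl < c'' := hcl_lt
      _ < st s / s := by rw [lt_div_iff₀ hspos]; linarith
  · -- upper bound
    intro cu hcu
    set c' := (K + cu) / 2 with hc'def
    have hc'pos : 0 < c' := by rw [hc'def]; linarith
    have hKc' : K < c' := by rw [hc'def]; linarith
    have hc'cu : c' < cu := by rw [hc'def]; linarith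
    have hcmp : L * α^2 < L * (β * c')^2 := by
      have h1 : |α| < |β| * c' := by
        rw [hKdef] at hKc'
        calc |α| = |β| * K := by rw [hKdef]; field_simp [(abs_pos.mpr hβ).ne']
          _ < |β| * c' := mul_lt_mul_of_pos_left hKc' (abs_pos.mpr hβ)
      have h2 : α^2 < (β * c')^2 := by
        have ha1 : (0:ℝ) ≤ |α| := abs_nonneg _
        have := mul_self_lt_mul_self ha1 h1
        calc α^2 = |α|^2 := (sq_abs α).symm
          _ < (β * c')^2 := by rw [mul_pow, ← sq_abs β]; nlinarith
      nlinarith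
    have hEV := hαq.eventually_lt (hc (β * c') (mul_ne_zero hβ (ne_of_gt hc'pos))) hcmp
    have hEV' : ∀ᶠ s in nhdsWithin (0:ℝ) (Ioc (0:ℝ) δ),
        f (μ + α * s) / s^2 < f (μ + (β * c') * s) / s^2 := hEV.filter_mono hmono_le
    filter_upwards [hEV', key c' hc'pos] with s hs1 hs2
    obtain ⟨hc'sT, hsmem⟩ := hs2
    obtain ⟨hspos, hsδ⟩ := hsmem
    have hs2pos : (0:ℝ) < s^2 := by positivity
    have hflt : f (μ + β * st s) < f (μ + β * (c' * s)) := by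
      have := mul_lt_mul_of_pos_right hs1 hs2pos
      rw [div_mul_cancel₀ _ (ne_of_gt hs2pos), div_mul_cancel₀ _ (ne_of_gt hs2pos)] at this
      rw [← (hst s ⟨hspos, hsδ⟩).2, mul_assoc] at this
      exact this
    have hmemc : c' * s ∈ Icc (0:ℝ) T := ⟨by positivity, hc'sT⟩
    have := (hmono.lt_iff_lt (hst s ⟨hspos, hsδ⟩).1 hmemc).mp hflt
    calc st s / s < c' := by rw [div_lt_iff₀ hspos]; linarith
      _ < cu := hc'cu

/-- there is δ > 0 such that for each s ∈ (0,δ] there is s̃(s) ∈ [0,1]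
with B(s,ρ,x) = B(s̃(s),ρ,1−x); moreover s̃(s)/s → e^ρ as s → 0⁺ if x = 0, and
s̃(s)/s → e^{−ρ} if x = 1. -/
theorem stilde_exists (ρ : ℝ) (x : ℝ) (hx : x = 0 ∨ x = 1) :
    ∃ δ > (0 : ℝ), ∃ st : ℝ → ℝ,
      (∀ s ∈ Set.Ioc (0 : ℝ) δ, st s ∈ Set.Icc (0 : ℝ) 1 ∧ B1 s ρ x = B1 (st s) ρ (1 - x)) ∧
      (x = 0 → Filter.Tendsto (fun s => st s / s)
        (nhdsWithin 0 (Set.Ioc (0 : ℝ) δ)) (nhds (Real.exp ρ))) ∧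
      (x = 1 → Filter.Tendsto (fun s => st s / s)
        (nhdsWithin 0 (Set.Ioc (0 : ℝ) δ)) (nhds (Real.exp (-ρ)))) := by
  obtain ⟨hμ0, hμ1⟩ := mu_mem ρ
  set μ := mu1 ρ with hμdef
  have hL : (0:ℝ) < (1 / μ + 1 / (1 - μ)) / 2 := by
    have h1 : (0:ℝ) < 1 - μ := by linarith
    positivity
  have hexp : Real.exp ρ = μ / (1 - μ) := by
    rw [hμdef, one_sub_mu, mu1]
    have := Real.exp_pos ρ
    field_simp
  rcases hx with hx0 | hx1
  · -- x = 0 : α = -μ, β = 1 - μ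
    subst hx0
    have hmono : StrictMonoOn (fun t => b1 (μ + (1 - μ) * t) ρ) (Icc (0:ℝ) (1/2)) := by
      intro t1 ht1 t2 ht2 hlt
      have hm : ∀ t ∈ Icc (0:ℝ) (1/2), μ + (1 - μ) * t ∈ Icc μ ((1 + μ)/2) := by
        intro t ht
        obtain ⟨h1, h2⟩ := ht
        constructor
        · nlinarith
        · nlinarith
      exact b1_strictMonoOn ρ (hm t1 ht1) (hm t2 ht2) (by nlinarith)
    have hcont : ContinuousOn (fun t => b1 (μ + (1 - μ) * t) ρ) (Icc (0:ℝ) (1/2)) :=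
      ((b1_continuous ρ).comp (by continuity)).continuousOn
    obtain ⟨δ, hδ, st, hprop, hlim⟩ :=
      master (fun l => b1 l ρ) μ (-μ) (1 - μ) (1/2) ((1 / μ + 1 / (1 - μ)) / 2)
        (by norm_num) (by norm_num) hmono hcont (b1_mu ρ) (b1_quad ρ) hL
        (by linarith) (by linarith)
    refine ⟨δ, hδ, st, ?_, ?_, ?_⟩
    · intro s hs
      obtain ⟨hmem, heq⟩ := hprop s hs
      refine ⟨hmem, ?_⟩
      show b1 ((1 - s) * mu1 ρ + s * 0) ρ = b1 ((1 - st s) * mu1 ρ + st s * (1 - 0)) ρ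
      rw [show (1 - s) * mu1 ρ + s * 0 = μ + -μ * s by rw [← hμdef]; ring,
          show (1 - st s) * mu1 ρ + st s * (1 - 0) = μ + (1 - μ) * st s by rw [← hμdef]; ring]
      exact heq
    · intro _
      have : |(-μ)| / |1 - μ| = Real.exp ρ := by
        rw [abs_of_nonpos (by linarith), abs_of_pos (by linarith), neg_neg, hexp]
      rwa [this] at hlim
    · intro h01; norm_num at h01
  · -- x = 1 : α = 1 - μ, β = -μ
    subst hx1
    have hmono : StrictMonoOn (fun t => b1 (μ + -μ * t) ρ) (Icc (0:ℝ) (1/2)) := by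
      intro t1 ht1 t2 ht2 hlt
      have hm : ∀ t ∈ Icc (0:ℝ) (1/2), μ + -μ * t ∈ Icc (μ/2) μ := by
        intro t ht
        obtain ⟨h1, h2⟩ := ht
        constructor
        · nlinarith
        · nlinarith
      exact b1_strictAntiOn ρ (hm t2 ht2) (hm t1 ht1) (by nlinarith)
    have hcont : ContinuousOn (fun t => b1 (μ + -μ * t) ρ) (Icc (0:ℝ) (1/2)) :=
      ((b1_continuous ρ).comp (by continuity)).continuousOn
    obtain ⟨δ, hδ, st, hprop, hlim⟩ :=
      master (fun l => b1 l ρ) μ (1 - μ) (-μ) (1/2) ((1 / μ + 1 / (1 - μ)) / 2)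
        (by norm_num) (by norm_num) hmono hcont (b1_mu ρ) (b1_quad ρ) hL
        (by linarith) (by linarith)
    refine ⟨δ, hδ, st, ?_, ?_, ?_⟩
    · intro s hs
      obtain ⟨hmem, heq⟩ := hprop s hs
      refine ⟨hmem, ?_⟩
      show b1 ((1 - s) * mu1 ρ + s * 1) ρ = b1 ((1 - st s) * mu1 ρ + st s * (1 - 1)) ρ
      rw [show (1 - s) * mu1 ρ + s * 1 = μ + (1 - μ) * s by rw [← hμdef]; ring,
          show (1 - st s) * mu1 ρ + st s * (1 - 1) = μ + -μ * st s by rw [← hμdef]; ring]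
      exact heq
    · intro h10; norm_num at h10
    · intro _
      have : |(1 - μ)| / |(-μ)| = Real.exp (-ρ) := by
        rw [abs_of_pos (by linarith), abs_of_nonpos (by linarith), neg_neg,
          Real.exp_neg, hexp]
        rw [inv_div]
      rwa [this] at hlim
end
end
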